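/- Fix n ≥ 3, pairwise distinct indices j, k, ℓ ∈ Fin n, and c ∈ ℝ with c ≠ 0, and let φ be the shear flow defined by φ(t,x)_j = x_j cos(c x_ℓ t) + x_k sin(c x_ℓ t), φ(t,x)_k = −x_j sin(c x_ℓ t) + x_k cos(c x_ℓ t), φ(t,x)_p = x_p for p ∉ {j,k}. Let x ∈ ℝⁿ satisfy x_ℓ ≠ 0 and (x_j, x_k) ≠ (0,0), and for m ∈ ℕ set t_m := 2πm / (c x_ℓ). Then for every symmetric positive-definite bilinear form g on ℝⁿ and every α ∈ ℝ there exist m ∈ ℕ and η ∈ ℝⁿ such that g(Dφ_{t_m}(x) η, Dφ_{t_m}(x) η) ≠ α g(η, η), where Dφ_{t_m}(x) denotes the Fréchet derivative of y ↦ φ(t_m, y) at x. In other words, the derivatives of the return maps φ_{t_m} at x cannot all be conformal with a common conformal factor with respect to any inner product on ℝⁿ. -/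

import Mathlib

open Real

/-- The explicit shear flow: rotation in the `(j,k)`-plane with angular velocity `c * x ℓ`. -/
noncomputable def shearFlow (n : ℕ) (j k ℓ : Fin n) (c : ℝ) (t : ℝ) (x : Fin n → ℝ) :
    Fin n → ℝ :=
  fun p =>
    if p = j then x j * Real.cos (c * x ℓ * t) + x k * Real.sin (c * x ℓ * t)
    else if p = k then -(x j) * Real.sin (c * x ℓ * t) + x k * Real.cos (c * x ℓ * t)
    else x p

/-- Derivative of the shear flow at a time where the angle is a multiple of `2π`. -/
lemma shearFlow_hasFDerivAt (n : ℕ) (j k ℓ : Fin n) (hjk : j ≠ k)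
    (c t : ℝ) (x : Fin n → ℝ)
    (h1 : Real.cos (c * x ℓ * t) = 1) (h0 : Real.sin (c * x ℓ * t) = 0) :
    HasFDerivAt (fun y => shearFlow n j k ℓ c t y)
      ((ContinuousLinearMap.pi fun p =>
        if p = j then
          ContinuousLinearMap.proj j + (c * t * x k) • ContinuousLinearMap.proj ℓ
        else if p = k then
          ContinuousLinearMap.proj k - (c * t * x j) • ContinuousLinearMap.proj ℓ
        else ContinuousLinearMap.proj p :
        (Fin n → ℝ) →L[ℝ] (Fin n → ℝ))) x := by
  rw [hasFDerivAt_pi']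
  intro p
  rw [ContinuousLinearMap.proj_pi]
  have hθ : HasFDerivAt (fun y : Fin n → ℝ => c * y ℓ * t)
      ((c * t) • ContinuousLinearMap.proj (R := ℝ) (φ := fun _ : Fin n => ℝ) ℓ) x := by
    have := ((hasFDerivAt_apply (𝕜 := ℝ) ℓ x).const_mul c).mul_const t
    refine this.congr_fderiv ?_
    ext η
    simp only [ContinuousLinearMap.smul_apply, ContinuousLinearMap.proj_apply, smul_eq_mul]
    ring
  have hcos := hθ.cos
  have hsin := hθ.sin
  by_cases hpj : p = j
  · subst hpj
    simp only [shearFlow, if_pos rfl, ↓reduceIte]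
    have hA := ((hasFDerivAt_apply p x).mul hcos).add ((hasFDerivAt_apply k x).mul hsin)
    have hA' : HasFDerivAt (fun y : Fin n → ℝ =>
        y p * Real.cos (c * y ℓ * t) + y k * Real.sin (c * y ℓ * t)) _ x := hA
    refine hA'.congr_fderiv ?_
    ext η
    simp only [eq_self_iff_true, if_true, ContinuousLinearMap.add_apply,
      ContinuousLinearMap.sub_apply, ContinuousLinearMap.smul_apply,
      ContinuousLinearMap.proj_apply, ContinuousLinearMap.neg_apply, smul_eq_mul, h1, h0, ↓reduceIte, Pi.neg_apply]
    ring
  · by_cases hpk : p = k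
    · subst hpk
      simp only [shearFlow, if_neg hpj, if_pos rfl, ↓reduceIte]
      have hA := (((hasFDerivAt_apply j x).neg.mul hsin)).add ((hasFDerivAt_apply p x).mul hcos)
      have hA' : HasFDerivAt (fun y : Fin n → ℝ =>
          -(y j) * Real.sin (c * y ℓ * t) + y p * Real.cos (c * y ℓ * t)) _ x := hA
      refine hA'.congr_fderiv ?_
      ext η
      simp only [hpj, eq_self_iff_true, if_true, if_false, ContinuousLinearMap.add_apply,
        ContinuousLinearMap.sub_apply, ContinuousLinearMap.smul_apply,
        ContinuousLinearMap.proj_apply, ContinuousLinearMap.neg_apply, smul_eq_mul, h1, h0, ↓reduceIte, Pi.neg_apply]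
      ring
    · simp only [shearFlow, if_neg hpj, if_neg hpk]
      exact hasFDerivAt_apply p x

theorem shearFlow_return_maps_not_conformal
    (n : ℕ) (hn : 3 ≤ n) (j k ℓ : Fin n)
    (hjk : j ≠ k) (hjl : j ≠ ℓ) (hkl : k ≠ ℓ)
    (c : ℝ) (hc : c ≠ 0)
    (x : Fin n → ℝ) (hx : x ℓ ≠ 0) (hx' : ¬ (x j = 0 ∧ x k = 0))
    (g : (Fin n → ℝ) →ₗ[ℝ] (Fin n → ℝ) →ₗ[ℝ] ℝ)
    (hsymm : ∀ v w, g v w = g w v)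
    (hpos : ∀ v, v ≠ 0 → 0 < g v v)
    (α : ℝ) :
    ∃ (m : ℕ) (η : Fin n → ℝ),
      g (fderiv ℝ (fun y => shearFlow n j k ℓ c (2 * Real.pi * m / (c * x ℓ)) y) x η)
        (fderiv ℝ (fun y => shearFlow n j k ℓ c (2 * Real.pi * m / (c * x ℓ)) y) x η)
      ≠ α * g η η := by
  by_contra hcon
  push_neg at hcon
  have hcx : c * x ℓ ≠ 0 := mul_ne_zero hc hx
  -- the angle at time t_m is 2πm
  have hangle : ∀ m : ℕ, c * x ℓ * (2 * Real.pi * m / (c * x ℓ)) = m * (2 * Real.pi) := by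
    intro m; field_simp
  have hcos1 : ∀ m : ℕ, Real.cos (c * x ℓ * (2 * Real.pi * m / (c * x ℓ))) = 1 := by
    intro m; rw [hangle m]; exact Real.cos_nat_mul_two_pi m
  have hsin0 : ∀ m : ℕ, Real.sin (c * x ℓ * (2 * Real.pi * m / (c * x ℓ))) = 0 := by
    intro m
    rw [hangle m]
    have : (m : ℝ) * (2 * Real.pi) = ((2 * m : ℕ) : ℝ) * Real.pi := by push_cast; ring
    rw [this, Real.sin_nat_mul_pi]
  set w : Fin n → ℝ := fun p => if p = j then x k else if p = k then -(x j) else 0 with hw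
  -- the derivative applied to η
  have hD : ∀ (m : ℕ) (η : Fin n → ℝ),
      fderiv ℝ (fun y => shearFlow n j k ℓ c (2 * Real.pi * m / (c * x ℓ)) y) x η
        = η + (c * (2 * Real.pi * m / (c * x ℓ)) * η ℓ) • w := by
    intro m η
    rw [(shearFlow_hasFDerivAt n j k ℓ hjk c _ x (hcos1 m) (hsin0 m)).fderiv]
    funext p
    by_cases hpj : p = j
    · subst hpj
      simp [hw, ContinuousLinearMap.proj_apply]
      ring
    · by_cases hpk : p = k
      · subst hpk
        simp [hw, if_neg hpj, ContinuousLinearMap.proj_apply]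
        ring
      · simp [hw, if_neg hpj, if_neg hpk, ContinuousLinearMap.proj_apply]
  have hwne : w ≠ 0 := by
    intro h
    by_cases hxj : x j = 0
    · have hxk : x k ≠ 0 := fun hk => hx' ⟨hxj, hk⟩
      apply hxk
      have := congrFun h j
      simpa [hw] using this
    · apply hxj
      have := congrFun h k
      simpa [hw, if_neg (Ne.symm hjk), neg_eq_zero] using this
  -- m = 0 : derivative is the identity, so α = 1
  have hα : α = 1 := by
    have h0 := hcon 0 w
    rw [hD 0 w] at h0
    simp at h0
    have hgw := hpos w hwne
    -- h0 : g w w = α * g w w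
    nlinarith [h0, hpos w hwne]
  subst hα
  set e : Fin n → ℝ := Pi.single ℓ (1 : ℝ) with he
  have heℓ : e ℓ = 1 := by simp [he]
  set s : ℝ := 2 * Real.pi / x ℓ with hs
  have hcoef : ∀ m : ℕ, c * (2 * Real.pi * m / (c * x ℓ)) * e ℓ = m * s := by
    intro m; rw [heℓ, hs]; field_simp
  -- bilinear expansion
  have hexp : ∀ r : ℝ, g (e + r • w) (e + r • w)
      = g e e + 2 * r * g e w + r ^ 2 * g w w := by
    intro r
    simp only [map_add, map_smul, LinearMap.add_apply, LinearMap.smul_apply, smul_eq_mul]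
    rw [hsymm w e]
    ring
  have key : ∀ m : ℕ, g e e + 2 * (m * s) * g e w + (m * s) ^ 2 * g w w = g e e := by
    intro m
    have h := hcon m e
    rw [hD m e, hcoef m, hexp] at h
    linarith [h]
  have h1 := key 1
  have h2 := key 2
  have hsne : s ≠ 0 := by
    rw [hs]
    exact div_ne_zero (by positivity) hx
  have hgw : g w w = 0 := by
    push_cast at h1 h2
    have h3 : 2 * s ^ 2 * g w w = 0 := by nlinarith [h1, h2]
    have h2s : (2 : ℝ) * s ^ 2 ≠ 0 := mul_ne_zero two_ne_zero (pow_ne_zero 2 hsne)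
    exact (mul_eq_zero.mp h3).resolve_left h2s
  exact absurd hgw (ne_of_gt (hpos w hwne))
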